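/- Let N ≥ 1 and a be integers with 1 ≤ a ≤ N, and let n be a nonnegative integer and l ≥ 1 an integer. Then ∑_{k_1 ≥ ⋯ ≥ k_l ≥ n+1} 1/((Nk_1+a)² ⋯ (Nk_l+a)²) < (1/(N(Nn+a)))^l, where the sum on the left converges. -/

import Mathlib

open Finset

/-- Factorization of a tsum over `Fin l → ℕ` of a product of a nonnegative summable
function as a power of its tsum. -/
lemma aux_pi_tsum (f : ℕ → ℝ) (hf : Summable f) (h0 : ∀ k, 0 ≤ f k) :
    ∀ l : ℕ, Summable (fun k : Fin l → ℕ => ∏ i, f (k i)) ∧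
      (∑' k : Fin l → ℕ, ∏ i, f (k i)) = (∑' k, f k) ^ l := by
  intro l
  induction l with
  | zero =>
    have hs : HasSum (fun k : Fin 0 → ℕ => ∏ i, f (k i)) 1 := by
      have := hasSum_single (f := fun k : Fin 0 → ℕ => ∏ i, f (k i))
        (default : Fin 0 → ℕ) (fun b hb => absurd (Subsingleton.elim b default) hb)
      simpa using this
    exact ⟨hs.summable, by simpa using hs.tsum_eq⟩
  | succ l ih =>
    have hcomp : ∀ q : ℕ × (Fin l → ℕ),
        (∏ i, f ((Fin.consEquiv (fun _ => ℕ) q) i)) = f q.1 * ∏ i, f (q.2 i) := by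
      rintro ⟨x, p⟩
      simp only [Fin.consEquiv_apply]
      rw [Fin.prod_univ_succ]
      simp
    have hmul : Summable (fun q : ℕ × (Fin l → ℕ) => f q.1 * ∏ i, f (q.2 i)) :=
      Summable.mul_of_nonneg (f := f) (g := fun k : Fin l → ℕ => ∏ i, f (k i))
        hf ih.1 (Pi.le_def.mpr (by simpa using h0)) (Pi.le_def.mpr (by
          intro p
          simpa using Finset.prod_nonneg (fun i _ => h0 (p i))))
    have hsum : Summable (fun k : Fin (l + 1) → ℕ => ∏ i, f (k i)) := by
      rw [← (Fin.consEquiv (fun _ => ℕ)).summable_iff]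
      exact hmul.congr fun q => (hcomp q).symm
    refine ⟨hsum, ?_⟩
    have h1 : (∑' k : Fin (l + 1) → ℕ, ∏ i, f (k i))
        = ∑' q : ℕ × (Fin l → ℕ), f q.1 * ∏ i, f (q.2 i) := by
      rw [← (Fin.consEquiv (fun _ => ℕ)).tsum_eq (fun k : Fin (l + 1) → ℕ => ∏ i, f (k i))]
      exact tsum_congr hcomp
    rw [h1, ← Summable.tsum_mul_tsum hf ih.1 hmul, ih.2, pow_succ]
    ring

/-- The key single-variable tail estimate. -/
lemma aux_single (N a : ℕ) (h1 : 1 ≤ a) (h2 : a ≤ N) (n : ℕ) :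
    Summable (fun k : ℕ => if n + 1 ≤ k then (1 : ℝ) / ((N : ℝ) * k + a) ^ 2 else 0) ∧
    (∑' k : ℕ, if n + 1 ≤ k then (1 : ℝ) / ((N : ℝ) * k + a) ^ 2 else 0)
      < 1 / ((N : ℝ) * ((N : ℝ) * n + a)) := by
  have hN : 1 ≤ N := le_trans h1 h2
  have hNR : (1 : ℝ) ≤ N := by exact_mod_cast hN
  have haR : (1 : ℝ) ≤ a := by exact_mod_cast h1
  have hpos : ∀ k : ℕ, (0 : ℝ) < (N : ℝ) * k + a := by
    intro k
    have : (0 : ℝ) ≤ (N : ℝ) * k := by positivity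
    linarith
  set v : ℕ → ℝ := fun k => 1 / ((N : ℝ) * ((N : ℝ) * k + a)) with hv
  have hvpos : ∀ k, 0 < v k := fun k => by
    have := hpos k; simp only [hv]; positivity
  -- v tends to 0
  have hvto : Filter.Tendsto v Filter.atTop (nhds 0) := by
    have hle : ∀ k : ℕ, v k ≤ 1 / ((k : ℝ) + 1) := by
      intro k
      have hk1 : (0 : ℝ) < (k : ℝ) + 1 := by positivity
      have hbig : (k : ℝ) + 1 ≤ (N : ℝ) * ((N : ℝ) * k + a) := by
        have h3 : (k : ℝ) ≤ (N : ℝ) * k := le_mul_of_one_le_left (Nat.cast_nonneg k) hNR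
        have h4 : (N : ℝ) * k + a ≤ (N : ℝ) * ((N : ℝ) * k + a) :=
          le_mul_of_one_le_left (le_of_lt (hpos k)) hNR
        linarith
      exact one_div_le_one_div_of_le hk1 hbig
    have h0le : ∀ k : ℕ, 0 ≤ v k := fun k => (hvpos k).le
    exact squeeze_zero h0le hle tendsto_one_div_add_atTop_nhds_zero_nat
  -- telescoping sum
  set t : ℕ → ℝ := fun k => if n + 1 ≤ k then v (k - 1) - v k else 0 with ht
  have htval : ∀ j : ℕ, t (j + (n + 1)) = v (n + j) - v (n + j + 1) := by
    intro j
    simp only [ht]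
    rw [if_pos (by omega)]
    congr 2 <;> omega
  have htnonneg : ∀ k, 0 ≤ t k := by
    intro k
    simp only [ht]
    split
    · rename_i hk
      have hk1 : 1 ≤ k := by omega
      have hcast : ((k - 1 : ℕ) : ℝ) ≤ (k : ℝ) := by
        exact_mod_cast Nat.sub_le k 1
      have : v k ≤ v (k - 1) := by
        simp only [hv]
        gcongr
      linarith
    · exact le_refl 0
  have hw : HasSum (fun j : ℕ => v (n + j) - v (n + j + 1)) (v n) := by
    rw [hasSum_iff_tendsto_nat_of_nonneg]
    · have hps : ∀ m : ℕ, ∑ j ∈ Finset.range m, (v (n + j) - v (n + j + 1))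
          = v n - v (n + m) := by
        intro m
        have := Finset.sum_range_sub' (f := fun j => v (n + j)) m
        simpa [← add_assoc] using this
      simp only [hps]
      have : Filter.Tendsto (fun m : ℕ => v (n + m)) Filter.atTop (nhds 0) :=
        (hvto.comp (Filter.tendsto_add_atTop_nat n)).congr (fun m => by simp [add_comm])
      simpa using (tendsto_const_nhds (x := v n)).sub this
    · intro j
      have := htnonneg (j + (n + 1))
      rwa [htval j] at this
  have hts : HasSum t (v n) := by
    have hinj : Function.Injective (fun j : ℕ => j + (n + 1)) := fun x y h => by
      simpa using h
    have hvanish : ∀ x ∉ Set.range (fun j : ℕ => j + (n + 1)), t x = 0 := by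
      intro x hx
      simp only [ht]
      rw [if_neg]
      intro hc
      exact hx ⟨x - (n + 1), by simp; omega⟩
    refine (Function.Injective.hasSum_iff hinj hvanish).mp ?_
    have hco : (t ∘ fun j : ℕ => j + (n + 1)) = fun j => v (n + j) - v (n + j + 1) :=
      funext htval
    rw [hco]
    exact hw
  -- pointwise strict bound
  set f : ℕ → ℝ := fun k => if n + 1 ≤ k then (1 : ℝ) / ((N : ℝ) * k + a) ^ 2 else 0 with hf
  have hf0 : ∀ k, 0 ≤ f k := by
    intro k; simp only [hf]; split
    · positivity
    · exact le_refl 0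
  have hlt : ∀ k, n + 1 ≤ k → f k < t k := by
    intro k hk
    simp only [hf, ht, if_pos hk]
    have hk1 : 1 ≤ k := by omega
    have hcast : ((k - 1 : ℕ) : ℝ) = (k : ℝ) - 1 := by
      have := Nat.cast_sub hk1 (R := ℝ); simpa using this
    set x : ℝ := (N : ℝ) * ((k : ℝ) - 1) + a with hx
    set y : ℝ := (N : ℝ) * k + a with hy
    have hxpos : 0 < x := by
      have := hpos (k - 1); rw [hcast] at this; exact this
    have hypos : 0 < y := hpos k
    have hxy : x < y := by
      simp only [hx, hy]
      nlinarith
    have hvdiff : v (k - 1) - v k = 1 / (x * y) := by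
      simp only [hv, hcast, ← hx, ← hy]
      have hN0 : (0 : ℝ) < N := by linarith
      field_simp
      ring
    rw [hvdiff]
    rw [div_lt_div_iff₀ (by positivity) (by positivity)]
    nlinarith
  have hle : ∀ k, f k ≤ t k := by
    intro k
    by_cases hk : n + 1 ≤ k
    · exact (hlt k hk).le
    · simp only [hf, ht, if_neg hk]; exact le_refl 0
  constructor
  · exact Summable.of_nonneg_of_le hf0 hle hts.summable
  · have := Summable.tsum_lt_tsum_of_nonneg hf0 hle (hlt (n + 1) (le_refl _)) hts.summable
    rwa [hts.tsum_eq] at this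

theorem tail_tStar_lt
    (N a : ℕ) (h1 : 1 ≤ a) (h2 : a ≤ N) (n l : ℕ) (hl : 1 ≤ l) :
    Summable (fun k : Fin l → ℕ =>
      if (∀ i, n + 1 ≤ k i) ∧ (∀ i j : Fin l, i ≤ j → k j ≤ k i) then
        ∏ i : Fin l, (1 : ℝ) / ((N : ℝ) * k i + a) ^ 2
      else 0) ∧
    (∑' k : Fin l → ℕ,
        if (∀ i, n + 1 ≤ k i) ∧ (∀ i j : Fin l, i ≤ j → k j ≤ k i) then
          ∏ i : Fin l, (1 : ℝ) / ((N : ℝ) * k i + a) ^ 2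
        else 0)
      < (1 / ((N : ℝ) * ((N : ℝ) * n + a))) ^ l := by
  set f : ℕ → ℝ := fun k => if n + 1 ≤ k then (1 : ℝ) / ((N : ℝ) * k + a) ^ 2 else 0 with hfdef
  obtain ⟨hfs, hflt⟩ := aux_single N a h1 h2 n
  have hf0 : ∀ k, 0 ≤ f k := by
    intro k; simp only [hfdef]; split
    · positivity
    · exact le_refl 0
  obtain ⟨hFs, hFeq⟩ := aux_pi_tsum f hfs hf0 l
  set g : (Fin l → ℕ) → ℝ := fun k =>
    if (∀ i, n + 1 ≤ k i) ∧ (∀ i j : Fin l, i ≤ j → k j ≤ k i) then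
      ∏ i : Fin l, (1 : ℝ) / ((N : ℝ) * k i + a) ^ 2
    else 0 with hgdef
  have hg0 : ∀ k, 0 ≤ g k := by
    intro k; simp only [hgdef]; split
    · exact Finset.prod_nonneg fun i _ => by positivity
    · exact le_refl 0
  have hgle : ∀ k : Fin l → ℕ, g k ≤ ∏ i, f (k i) := by
    intro k
    simp only [hgdef]
    split
    · rename_i hcond
      refine le_of_eq (Finset.prod_congr rfl fun i _ => ?_)
      simp only [hfdef]
      rw [if_pos (hcond.1 i)]
    · exact Finset.prod_nonneg fun i _ => hf0 _
  have hgs : Summable g := Summable.of_nonneg_of_le hg0 hgle hFs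
  refine ⟨hgs, ?_⟩
  have h1' : ∑' k, g k ≤ ∑' k : Fin l → ℕ, ∏ i, f (k i) := Summable.tsum_le_tsum hgle hgs hFs
  have h2' : (∑' k, f k) ^ l < (1 / ((N : ℝ) * ((N : ℝ) * n + a))) ^ l := by
    apply pow_lt_pow_left₀ hflt (tsum_nonneg hf0)
    omega
  calc ∑' k, g k ≤ (∑' k, f k) ^ l := by rw [← hFeq]; exact h1'
    _ < _ := h2'
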